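/- A binary word w is a minimal antisquare (that is, w is an antisquare, and every proper factor of w contains no antisquare factor other than possibly 01 and 10) if and only if w belongs to one of the following families, organized by its order n: for n = 1, w ∈ {01, 10}; for n = 2, w ∈ {0011, 0110, 1001, 1100}; for n = 3, w ∈ {010101, 101010}; there are no minimal antisquares of order 4; and for each n ≥ 5, w is one of the 2n conjugates (cyclic shifts) of 0^{n−2} 1 0 1^{n−2} 0 1. -/

import Mathlib

/-- Bitwise complement of a binary word. -/
def comp (x : List Bool) : List Bool := x.map (fun b => !b)

/-- An antisquare is a nonempty word of the form `y ++ comp y`. -/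
def Antisquare (x : List Bool) : Prop := ∃ y : List Bool, y ≠ [] ∧ x = y ++ comp y

/-- `w` has period `p ≥ 1` if `w[i] = w[i+p]` whenever both indices are valid. -/
def HasPeriod (w : List Bool) (p : ℕ) : Prop :=
  1 ≤ p ∧ ∀ i, i + p < w.length → w.getD i false = w.getD (i + p) false

/-- The exponent of a finite word: its length divided by its least period. -/
noncomputable def exponent (w : List Bool) : ℝ :=
  (w.length : ℝ) / ((sInf {p : ℕ | HasPeriod w p} : ℕ) : ℝ)

/-- `u` is a factor of the right-infinite word `w : ℕ → Bool`. -/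
def FactorInf (u : List Bool) (w : ℕ → Bool) : Prop :=
  ∃ i : ℕ, u = (List.range u.length).map (fun t => w (i + t))

/-- `u` is a factor of the bi-infinite word `w : ℤ → Bool`. -/
def FactorBi (u : List Bool) (w : ℤ → Bool) : Prop :=
  ∃ i : ℤ, u = (List.range u.length).map (fun t => w (i + (t : ℤ)))

/-- A binary word is good if its only antisquare factors are `01` and `10`. -/
def Good (w : List Bool) : Prop :=
  ∀ u, u <:+: w → Antisquare u → u = [false, true] ∨ u = [true, false]

/-- A minimal antisquare: an antisquare all of whose proper factors are good. -/
def MinAnti (w : List Bool) : Prop :=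
  Antisquare w ∧ ∀ u, u <:+: w → u ≠ w → Good u

/-- The word 0^{n-2} 1 0 1^{n-2} 0 1, an antisquare of order n. -/
def pat (n : ℕ) : List Bool :=
  List.replicate (n - 2) false ++ [true, false] ++ List.replicate (n - 2) true ++ [false, true]

def BV (V : ℕ → Bool) (x : ℕ) : Bool := V (x+1) != V x

lemma bne_assoc (a b c : Bool) : ((a != b) != c) = (a != (b != c)) := by
  cases a <;> cases b <;> cases c <;> rfl

lemma V_succ (V : ℕ → Bool) (x : ℕ) : V (x+1) = (BV V x != V x) := by
  unfold BV; cases h1 : V (x+1) <;> cases h2 : V x <;> simp [h1, h2]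

lemma V_const (V : ℕ → Bool) : ∀ (m s : ℕ), (∀ j, j < m → BV V (s+j) = false) → V (s+m) = V s := by
  intro m
  induction m with
  | zero => intro s _; rfl
  | succ m ih =>
    intro s h
    have e : s + (m+1) = (s+m) + 1 := by omega
    rw [e, V_succ V (s+m), h m (by omega)]
    simp
    exact ih s (fun j hj => h j (by omega))

lemma build_anti (V : ℕ → Bool) (k r : ℕ) (hc : V (r+k) = !V r)
    (hm : ∀ j, j+1 < k → BV V (r+j+k) = BV V (r+j)) :
    ∀ j, j < k → V (r+j+k) = !V (r+j) := by
  intro j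
  induction j with
  | zero => intro _; simpa using hc
  | succ j ih =>
    intro hj
    have e1 : r + (j+1) + k = (r+j+k) + 1 := by omega
    have e2 : r + (j+1) = (r+j) + 1 := by omega
    rw [e1, V_succ V (r+j+k), hm j hj, ih (by omega), e2, V_succ V (r+j)]
    cases BV V (r+j) <;> cases V (r+j) <;> simp

def parV (V : ℕ → Bool) (s : ℕ) : ℕ → Bool
  | 0 => false
  | m+1 => (parV V s m) != (BV V (s+m))

lemma parV_spec (V : ℕ → Bool) (s : ℕ) : ∀ m, V (s+m) = (parV V s m != V s) := by
  intro m
  induction m with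
  | zero => simp [parV]
  | succ m ih =>
    have e : s + (m+1) = (s+m) + 1 := by omega
    rw [e, V_succ V (s+m), ih, parV]
    cases parV V s m <;> cases BV V (s+m) <;> cases V s <;> simp

lemma parV_add (V : ℕ → Bool) (s a : ℕ) : ∀ b, parV V s (a+b) = (parV V s a != parV V (s+a) b) := by
  intro b
  induction b with
  | zero => simp [parV]
  | succ b ih =>
    have e : a + (b+1) = (a+b) + 1 := by omega
    rw [e, parV, ih, parV, bne_assoc]
    have e2 : s + (a+b) = s + a + b := by omega
    rw [e2]

lemma scan (V : ℕ → Bool)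
    (HK : ∀ x, BV V x ≠ BV V (x+1) → BV V (x+2) = BV V (x+1))
    (HA : ∀ x, ¬(BV V x = true ∧ BV V (x+1) = true ∧ BV V (x+2) = true ∧ BV V (x+3) = true ∧ BV V (x+4) = true)) :
    ∀ m s, BV V s = false → BV V (s+m) = false →
      (∀ t, s ≤ t → t+4 ≤ s+m →
        ¬(BV V t = false ∧ BV V (t+1) = true ∧ BV V (t+2) = true ∧ BV V (t+3) = true ∧ BV V (t+4) = false)) →
      parV V s m = false := by
  intro m
  induction m using Nat.strong_induction_on with
  | _ m IH =>
    intro s h0 hm hNo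
    rcases Nat.eq_zero_or_pos m with hm0 | hmpos
    · subst hm0; rfl
    by_cases h1 : BV V (s+1) = false
    · have e : m = 1 + (m-1) := by omega
      rw [e, parV_add]
      have r1 : parV V s 1 = false := by simp [parV, h0]
      have r2 : parV V (s+1) (m-1) = false := by
        apply IH (m-1) (by omega) (s+1) h1
        · rw [show s+1+(m-1) = s+m by omega]; exact hm
        · intro t ht1 ht2; exact hNo t (by omega) (by omega)
      rw [r1, r2]; rfl
    · replace h1 : BV V (s+1) = true := by
        cases h : BV V (s+1); exact absurd h h1; rfl
      have h2 : BV V (s+2) = true := by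
        have := HK s (by rw [h0, h1]; simp)
        rw [h1] at this; exact this
      have hm3 : 3 ≤ m := by
        by_contra hc
        interval_cases m
        · rw [hm] at h1; exact absurd h1 (by simp)
        · rw [hm] at h2; exact absurd h2 (by simp)
      by_cases h3 : BV V (s+3) = false
      · have e : m = 3 + (m-3) := by omega
        rw [e, parV_add]
        have r1 : parV V s 3 = false := by simp [parV, h0, h1, h2]
        have r2 : parV V (s+3) (m-3) = false := by
          apply IH (m-3) (by omega) (s+3) h3
          · rw [show s+3+(m-3) = s+m by omega]; exact hm
          · intro t ht1 ht2; exact hNo t (by omega) (by omega)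
        rw [r1, r2]; rfl
      · replace h3 : BV V (s+3) = true := by
          cases h : BV V (s+3); exact absurd h h3; rfl
        by_cases h4 : BV V (s+4) = false
        · have hm4 : 4 ≤ m := by
            by_contra hc
            interval_cases m
            · rw [hm] at h3; exact absurd h3 (by simp)
          exact absurd ⟨h0, h1, h2, h3, h4⟩ (hNo s le_rfl (by omega))
        · replace h4 : BV V (s+4) = true := by
            cases h : BV V (s+4); exact absurd h h4; rfl
          have h5 : BV V (s+5) = false := by
            by_contra h5'
            replace h5' : BV V (s+5) = true := by
              cases h : BV V (s+5); exact absurd h h5'; rfl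
            exact HA (s+1) ⟨h1, by rw [show s+1+1 = s+2 by omega]; exact h2,
              by rw [show s+1+2 = s+3 by omega]; exact h3,
              by rw [show s+1+3 = s+4 by omega]; exact h4,
              by rw [show s+1+4 = s+5 by omega]; exact h5'⟩
          have hm5 : 5 ≤ m := by
            by_contra hc
            interval_cases m
            · rw [hm] at h3; exact absurd h3 (by simp)
            · rw [hm] at h4; exact absurd h4 (by simp)
          have e : m = 5 + (m-5) := by omega
          rw [e, parV_add]
          have r1 : parV V s 5 = false := by simp [parV, h0, h1, h2, h3, h4]
          have r2 : parV V (s+5) (m-5) = false := by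
            apply IH (m-5) (by omega) (s+5) h5
            · rw [show s+5+(m-5) = s+m by omega]; exact hm
            · intro t ht1 ht2; exact hNo t (by omega) (by omega)
          rw [r1, r2]; rfl

section Machine
variable (n : ℕ) (W : ℕ → Bool)

lemma machine (hn : 5 ≤ n)
    (Hanti : ∀ i, W (i+n) = !W i)
    (MV : ∀ k r, 2 ≤ k → 2*k ≤ n+1 → (∀ j, j < k → W (r+j+k) = !W (r+j)) → False) :
    ∃ R, W R = false ∧ (∀ j, j < n-3 → BV W (R+j) = false) ∧
      BV W (R+(n-3)) = true ∧ BV W (R+(n-2)) = true ∧ BV W (R+(n-1)) = true := by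
  have Bper : ∀ x, BV W (x+n) = BV W x := by
    intro x
    unfold BV
    rw [show x+n+1 = (x+1)+n by omega, Hanti (x+1), Hanti x]
    cases W (x+1) <;> cases W x <;> rfl
  have HA : ∀ x, ¬(BV W x = true ∧ BV W (x+1) = true ∧ BV W (x+2) = true ∧ BV W (x+3) = true ∧ BV W (x+4) = true) := by
    rintro x ⟨b0, b1, b2, b3, b4⟩
    have w1 : W (x+1) = !W x := by rw [V_succ W x, b0]; cases W x <;> rfl
    have w2 : W (x+2) = !W (x+1) := by
      rw [show x+2 = (x+1)+1 by omega, V_succ W (x+1), b1]; cases W (x+1) <;> rfl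
    have w3 : W (x+3) = !W (x+2) := by
      rw [show x+3 = (x+2)+1 by omega, V_succ W (x+2), b2]; cases W (x+2) <;> rfl
    have hc : W (x+3) = !W x := by rw [w3, w2, w1]; cases W x <;> rfl
    have hm : ∀ j, j+1 < 3 → BV W (x+j+3) = BV W (x+j) := by
      intro j hj
      have : j = 0 ∨ j = 1 := by omega
      rcases this with h | h <;> subst h
      · rw [show x+0+3 = x+3 by omega, show x+0 = x by omega, b3, b0]
      · rw [show x+1+3 = x+4 by omega, b4, b1]
    exact MV 3 x (by omega) (by omega) (build_anti W 3 x hc hm)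
  have HK : ∀ x, BV W x ≠ BV W (x+1) → BV W (x+2) = BV W (x+1) := by
    intro x hne
    by_contra h2
    have h20 : BV W (x+2) = BV W x := by
      have : ∀ a b c : Bool, a ≠ b → c ≠ b → c = a := by decide
      exact this _ _ _ hne h2
    have hc : W (x+2) = !W x := by
      rw [show x+2 = (x+1)+1 by omega, V_succ W (x+1), V_succ W x]
      have : ∀ a b c : Bool, a ≠ b → (b != (a != c)) = !c := by decide
      exact this _ _ _ hne
    have hm : ∀ j, j+1 < 2 → BV W (x+j+2) = BV W (x+j) := by
      intro j hj
      have hj0 : j = 0 := by omega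
      subst hj0
      rw [show x+0+2 = x+2 by omega, show x+0 = x by omega]
      exact h20
    exact MV 2 x (by omega) (by omega) (build_anti W 2 x hc hm)
  by_cases hex : ∃ s, BV W s = false
  swap
  · exfalso
    push_neg at hex
    have hall : ∀ s, BV W s = true := by
      intro s; cases h : BV W s; exact absurd h (hex s); rfl
    exact HA 0 ⟨hall 0, hall 1, hall 2, hall 3, hall 4⟩
  obtain ⟨s, hs⟩ := hex
  have hpar : parV W s n = true := by
    have h1 := parV_spec W s n
    rw [Hanti s] at h1
    have : ∀ p a : Bool, (!a) = (p != a) → p = true := by decide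
    exact this _ _ h1
  have hsn : BV W (s+n) = false := by rw [Bper]; exact hs
  have hthree : ∃ t, s ≤ t ∧ t+4 ≤ s+n ∧ BV W t = false ∧ BV W (t+1) = true ∧
      BV W (t+2) = true ∧ BV W (t+3) = true ∧ BV W (t+4) = false := by
    by_contra hno
    have := scan W HK HA n s hs hsn (by
      intro t ht1 ht2 hh
      exact hno ⟨t, ht1, ht2, hh.1, hh.2.1, hh.2.2.1, hh.2.2.2.1, hh.2.2.2.2⟩)
    rw [this] at hpar
    exact absurd hpar (by simp)
  obtain ⟨t, hst, htn, h0, h1, h2, h3, h4⟩ := hthree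
  set X := t + 2*n + 1 with hX
  have BX : BV W X = true := by
    rw [show X = ((t+1)+n)+n by omega, Bper, Bper]; exact h1
  have BX1 : BV W (X+1) = true := by
    rw [show X+1 = ((t+2)+n)+n by omega, Bper, Bper]; exact h2
  have BX2 : BV W (X+2) = true := by
    rw [show X+2 = ((t+3)+n)+n by omega, Bper, Bper]; exact h3
  have BX3f : BV W (X+3) = false := by
    rw [show X+3 = ((t+4)+n)+n by omega, Bper, Bper]; exact h4
  have BXm1 : BV W (t+2*n) = false := by
    rw [show t+2*n = (t+n)+n by omega, Bper, Bper]; exact h0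
  have Ba1 : BV W (t+2*n-1) = false := by
    by_contra hc
    replace hc : BV W (t+2*n-1) = true := by
      cases h : BV W (t+2*n-1); exact absurd h hc; rfl
    have hne : BV W (t+2*n-1) ≠ BV W ((t+2*n-1)+1) := by
      rw [hc, show (t+2*n-1)+1 = t+2*n by omega, BXm1]; simp
    have := HK _ hne
    rw [show (t+2*n-1)+2 = X by omega, show (t+2*n-1)+1 = t+2*n by omega, BXm1] at this
    rw [this] at BX
    exact absurd BX (by simp)
  by_cases hb : ∃ j, 3 ≤ j ∧ j + 1 ≤ n ∧ BV W (X+j) = true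
  · exfalso
    have hPg : ∃ j, BV W (X+3+j) = true := by
      obtain ⟨j, hj3, hjn, hjB⟩ := hb
      exact ⟨j - 3, by rw [show X+3+(j-3) = X+j by omega]; exact hjB⟩
    set g := Nat.find hPg with hgdef
    have hgB : BV W (X+3+g) = true := Nat.find_spec hPg
    have hgmin : ∀ j, j < g → BV W (X+3+j) = false := by
      intro j hj
      have := Nat.find_min hPg hj
      cases h : BV W (X+3+j); rfl; exact absurd h this
    have hg2 : 2 ≤ g := by
      by_contra hc
      have : g = 0 ∨ g = 1 := by omega
      rcases this with h | h
      · rw [h, show X+3+0 = X+3 by omega, BX3f] at hgB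
        exact absurd hgB (by simp)
      · have hne : BV W (X+2) ≠ BV W (X+2+1) := by
          rw [show X+2+1 = X+3 by omega, BX2, BX3f]; simp
        have h4' := HK (X+2) hne
        rw [show X+2+2 = X+4 by omega, show X+2+1 = X+3 by omega, BX3f] at h4'
        rw [h, show X+3+1 = X+4 by omega, h4'] at hgB
        exact absurd hgB (by simp)
    have hg4 : g ≤ n - 4 := by
      obtain ⟨j, hj3, hjn, hjB⟩ := hb
      have : g ≤ j - 3 := Nat.find_le (by rw [show X+3+(j-3) = X+j by omega]; exact hjB)
      omega
    have hgn : g ≤ n - 6 := by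
      by_contra hc
      have : g = n-4 ∨ g = n-5 := by omega
      rcases this with h | h
      · rw [h, show X+3+(n-4) = (t+2*n)+n by omega, Bper, BXm1] at hgB
        exact absurd hgB (by simp)
      · rw [h, show X+3+(n-5) = (t+2*n-1)+n by omega, Bper, Ba1] at hgB
        exact absurd hgB (by simp)
    have hyB1 : BV W (X+3+g+1) = true := by
      have hprev : BV W (X+2+g) = false := by
        have := hgmin (g-1) (by omega)
        rw [show X+3+(g-1) = X+2+g by omega] at this
        exact this
      have hne : BV W (X+2+g) ≠ BV W ((X+2+g)+1) := by
        rw [hprev, show (X+2+g)+1 = X+3+g by omega, hgB]; simp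
    --
      have := HK _ hne
      rw [show (X+2+g)+2 = X+3+g+1 by omega, show (X+2+g)+1 = X+3+g by omega, hgB] at this
      exact this
    have key : BV W (t+n+4+g) = true := by
      have h' := Bper (t+n+4+g)
      rw [show (t+n+4+g)+n = X+3+g by omega, hgB] at h'
      exact h'.symm
    have hPf : ∃ j, BV W (t+2*n - j) = true := by
      refine ⟨n - 4 - g, ?_⟩
      rw [show t+2*n - (n-4-g) = t+n+4+g by omega]
      exact key
    set f := Nat.find hPf with hfdef
    have hfB : BV W (t+2*n - f) = true := Nat.find_spec hPf
    have hfmin : ∀ j, j < f → BV W (t+2*n - j) = false := by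
      intro j hj
      have := Nat.find_min hPf hj
      cases h : BV W (t+2*n - j); rfl; exact absurd h this
    have hfub : f ≤ n - 4 - g := by
      apply Nat.find_le
      rw [show t+2*n - (n-4-g) = t+n+4+g by omega]
      exact key
    have hf1 : 1 ≤ f := by
      by_contra hc
      have h0' : f = 0 := by omega
      rw [h0', Nat.sub_zero, BXm1] at hfB
      exact absurd hfB (by simp)
    have hf2 : 2 ≤ f := by
      by_contra hc
      have h1' : f = 1 := by omega
      rw [h1', Ba1] at hfB
      exact absurd hfB (by simp)
    have Bz1 : BV W (t+2*n-f-1) = true := by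
      by_contra hcz
      replace hcz : BV W (t+2*n-f-1) = false := by
        cases h : BV W (t+2*n-f-1); rfl; exact absurd h hcz
      have hne : BV W (t+2*n-f-1) ≠ BV W ((t+2*n-f-1)+1) := by
        rw [hcz, show (t+2*n-f-1)+1 = t+2*n-f by omega, hfB]; simp
      have h' := HK _ hne
      rw [show (t+2*n-f-1)+2 = t+2*n-(f-1) by omega,
          show (t+2*n-f-1)+1 = t+2*n-f by omega, hfB] at h'
      have := hfmin (f-1) (by omega)
      rw [this] at h'
      exact absurd h' (by simp)
    by_cases hgf : g ≤ f
    · -- template right, k = g+3, r = X - g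
      have hzone : ∀ j, j < g → BV W ((X-g)+j) = false := by
        intro j hj
        have := hfmin (g-1-j) (by omega)
        rw [show t+2*n-(g-1-j) = (X-g)+j by omega] at this
        exact this
      have hWrX : W X = W (X-g) := by
        have := V_const W g (X-g) hzone
        rw [show (X-g)+g = X by omega] at this
        exact this
      have w1 : W (X+1) = !W X := by rw [V_succ W X, BX]; cases W X <;> rfl
      have w2 : W (X+2) = !W (X+1) := by
        rw [show X+2 = (X+1)+1 by omega, V_succ W (X+1), BX1]; cases W (X+1) <;> rfl
      have w3 : W (X+3) = !W (X+2) := by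
        rw [show X+3 = (X+2)+1 by omega, V_succ W (X+2), BX2]; cases W (X+2) <;> rfl
      have hc : W ((X-g)+(g+3)) = !W (X-g) := by
        rw [show (X-g)+(g+3) = X+3 by omega, w3, w2, w1, ← hWrX]
        cases W X <;> rfl
      have hm : ∀ j, j+1 < g+3 → BV W ((X-g)+j+(g+3)) = BV W ((X-g)+j) := by
        intro j hj
        rcases Nat.lt_trichotomy j g with h | h | h
        · rw [show (X-g)+j+(g+3) = X+3+j by omega, hgmin j h, hzone j h]
        · rw [show (X-g)+j+(g+3) = X+3+g by omega, hgB,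
              show (X-g)+j = X by omega, BX]
        · have hj1 : j = g+1 := by omega
          rw [show (X-g)+j+(g+3) = X+3+g+1 by omega, hyB1,
              show (X-g)+j = X+1 by omega, BX1]
      have hbnd : 2*g+5 ≤ n := by
        by_contra hcb
        have hj' : n-5-g < g := by omega
        have := hfmin (n-5-g) (by omega)
        have h2' := Bper (t+2*n-(n-5-g))
        rw [show (t+2*n-(n-5-g))+n = X+3+g+1 by omega, hyB1, this] at h2'
        exact absurd h2' (by simp)
      exact MV (g+3) (X-g) (by omega) (by omega) (build_anti W (g+3) (X-g) hc hm)
    · -- template left, k = f+3, r = z1 = t+2*n-f-1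
      have hfg : f < g := by omega
      have hz1B : BV W (t+2*n-f+1) = false := by
        have := hfmin (f-1) (by omega)
        rw [show t+2*n-(f-1) = t+2*n-f+1 by omega] at this
        exact this
      have hzoneL : ∀ j, j < f → BV W ((t+2*n-f+1)+j) = false := by
        intro j hj
        have := hfmin (f-1-j) (by omega)
        rw [show t+2*n-(f-1-j) = (t+2*n-f+1)+j by omega] at this
        exact this
      have hWXz : W X = W (t+2*n-f+1) := by
        have := V_const W f (t+2*n-f+1) hzoneL
        rw [show (t+2*n-f+1)+f = X by omega] at this
        exact this
      have wz : W (t+2*n-f) = !W (t+2*n-f-1) := by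
        have := V_succ W (t+2*n-f-1)
        rw [show (t+2*n-f-1)+1 = t+2*n-f by omega, Bz1] at this
        rw [this]; cases W (t+2*n-f-1) <;> rfl
      have wz1 : W (t+2*n-f+1) = !W (t+2*n-f) := by
        have := V_succ W (t+2*n-f)
        rw [show (t+2*n-f)+1 = t+2*n-f+1 by omega, hfB] at this
        rw [this]; cases W (t+2*n-f) <;> rfl
      have w1 : W (X+1) = !W X := by rw [V_succ W X, BX]; cases W X <;> rfl
      have hc : W ((t+2*n-f-1)+(f+3)) = !W (t+2*n-f-1) := by
        rw [show (t+2*n-f-1)+(f+3) = X+1 by omega, w1, hWXz, wz1, wz]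
        cases W (t+2*n-f-1) <;> rfl
      have hm : ∀ j, j+1 < f+3 → BV W ((t+2*n-f-1)+j+(f+3)) = BV W ((t+2*n-f-1)+j) := by
        intro j hj
        have h03 : j = 0 ∨ j = 1 ∨ (2 ≤ j ∧ j ≤ f+1) := by omega
        rcases h03 with h | h | ⟨h2j, hjf⟩
        · subst h
          rw [show (t+2*n-f-1)+0+(f+3) = X+1 by omega, BX1,
              show (t+2*n-f-1)+0 = t+2*n-f-1 by omega, Bz1]
        · subst h
          rw [show (t+2*n-f-1)+1+(f+3) = X+2 by omega, BX2,
              show (t+2*n-f-1)+1 = t+2*n-f by omega, hfB]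
        · have l1 : BV W (X+3+(j-2)) = false := hgmin (j-2) (by omega)
          have l2 : BV W ((t+2*n-f+1)+(j-2)) = false := hzoneL (j-2) (by omega)
          rw [show (t+2*n-f-1)+j+(f+3) = X+3+(j-2) by omega, l1,
              show (t+2*n-f-1)+j = (t+2*n-f+1)+(j-2) by omega, l2]
      have hbnd : f+g+4 ≤ n := by
        by_contra hcb
        have hz' := hgmin (n-4-f) (by omega)
        have h2' := Bper (t+2*n-f)
        rw [show (t+2*n-f)+n = X+3+(n-4-f) by omega, hz', hfB] at h2'
        exact absurd h2' (by simp)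
      exact MV (f+3) (t+2*n-f-1) (by omega) (by omega)
        (build_anti W (f+3) (t+2*n-f-1) hc hm)
  · -- case (a)
    have hbf : ∀ j, 3 ≤ j → j + 1 ≤ n → BV W (X+j) = false := by
      intro j hj1 hj2
      cases h : BV W (X+j)
      · rfl
      · exact absurd ⟨j, hj1, hj2, h⟩ hb
    by_cases haW : W (X+3) = false
    · refine ⟨X+3, haW, ?_, ?_, ?_, ?_⟩
      · intro j hj
        rw [show X+3+j = X+(3+j) by omega]
        exact hbf (3+j) (by omega) (by omega)
      · rw [show X+3+(n-3) = X+n by omega, Bper]; exact BX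
      · rw [show X+3+(n-2) = (X+1)+n by omega, Bper]; exact BX1
      · rw [show X+3+(n-1) = (X+2)+n by omega, Bper]; exact BX2
    · replace haW : W (X+3) = true := by
        cases h : W (X+3); exact absurd h haW; rfl
      refine ⟨X+3+n, ?_, ?_, ?_, ?_, ?_⟩
      · rw [Hanti (X+3), haW]; rfl
      · intro j hj
        rw [show X+3+n+j = (X+(3+j))+n by omega, Bper]
        exact hbf (3+j) (by omega) (by omega)
      · rw [show X+3+n+(n-3) = (X+n)+n by omega, Bper, Bper]; exact BX
      · rw [show X+3+n+(n-2) = ((X+1)+n)+n by omega, Bper, Bper]; exact BX1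
      · rw [show X+3+n+(n-1) = ((X+2)+n)+n by omega, Bper, Bper]; exact BX2
end Machine

def PatF (n i : ℕ) : Bool :=
  if i < n-2 then false
  else if i = n-2 then true
  else if i = n-1 then false
  else if i < 2*n-2 then true
  else if i = 2*n-2 then false
  else true

lemma reconstruct (n : ℕ) (W : ℕ → Bool) (hn : 5 ≤ n)
    (Hanti : ∀ i, W (i+n) = !W i) (R : ℕ)
    (hR0 : W R = false) (hz : ∀ j, j < n-3 → BV W (R+j) = false)
    (hb1 : BV W (R+(n-3)) = true) (hb2 : BV W (R+(n-2)) = true) (hb3 : BV W (R+(n-1)) = true) :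
    ∀ i, i < 2*n → W (R+i) = PatF n i := by
  have hcon : ∀ m, m ≤ n-3 → W (R+m) = W R :=
    fun m hm => V_const W m R (fun j hj => hz j (by omega))
  have Wn3 : W (R+(n-3)) = false := by rw [hcon (n-3) le_rfl, hR0]
  have Wn2 : W (R+(n-2)) = true := by
    have := V_succ W (R+(n-3))
    rw [show (R+(n-3))+1 = R+(n-2) by omega, hb1, Wn3] at this
    rw [this]; rfl
  have Wn1 : W (R+(n-1)) = false := by
    have := V_succ W (R+(n-2))
    rw [show (R+(n-2))+1 = R+(n-1) by omega, hb2, Wn2] at this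
    rw [this]; rfl
  intro i hi
  have hcase : i < n-2 ∨ i = n-2 ∨ i = n-1 ∨ (n ≤ i ∧ i < 2*n-2) ∨ i = 2*n-2 ∨ i = 2*n-1 := by
    omega
  rcases hcase with h | h | h | ⟨h1, h2⟩ | h | h
  · rw [hcon i (by omega), hR0, PatF, if_pos h]
  · rw [show R+i = R+(n-2) by omega, Wn2, PatF, if_neg (by omega), if_pos h]
  · rw [show R+i = R+(n-1) by omega, Wn1, PatF, if_neg (by omega), if_neg (by omega), if_pos h]
  · have : W (R+i) = !W (R+(i-n)) := by
      rw [show R+i = (R+(i-n))+n by omega]; exact Hanti _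
    rw [this, hcon (i-n) (by omega), hR0, PatF,
        if_neg (by omega), if_neg (by omega), if_neg (by omega), if_pos (by omega)]
    rfl
  · have : W (R+i) = !W (R+(n-2)) := by
      rw [show R+i = (R+(n-2))+n by omega]; exact Hanti _
    rw [this, Wn2, PatF, if_neg (by omega), if_neg (by omega), if_neg (by omega),
        if_neg (by omega), if_pos h]
    rfl
  · have : W (R+i) = !W (R+(n-1)) := by
      rw [show R+i = (R+(n-1))+n by omega]; exact Hanti _
    rw [this, Wn1, PatF, if_neg (by omega), if_neg (by omega), if_neg (by omega),
        if_neg (by omega), if_neg (by omega)]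
    rfl

lemma pat_length (n : ℕ) (hn : 2 ≤ n) : (pat n).length = 2*n := by
  simp [pat]; omega

lemma patF_eq (n : ℕ) (hn : 5 ≤ n) (i : ℕ) (h : i < 2*n) :
    (pat n).getD i false = PatF n i := by
  have hl : (pat n).length = 2*n := pat_length n (by omega)
  rw [List.getD_eq_getElem (pat n) false (by omega)]
  have hpat : pat n = List.replicate (n-2) false ++
      ([true,false] ++ (List.replicate (n-2) true ++ [false,true])) := by
    simp [pat]
  rcases (by omega : i < n-2 ∨ i = n-2 ∨ i = n-1 ∨ (n ≤ i ∧ i < 2*n-2) ∨ i = 2*n-2 ∨ i = 2*n-1)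
    with hc | hc | hc | ⟨hc1, hc2⟩ | hc | hc
  · rw [List.getElem_of_eq hpat, List.getElem_append_left (by simpa using hc),
        List.getElem_replicate]
    unfold PatF
    rw [if_pos hc]
  · rw [List.getElem_of_eq hpat, List.getElem_append_right (by simp; omega)]
    simp only [List.length_replicate]
    simp only [show i - (n-2) = 0 by omega]
    rw [List.getElem_append_left (by simp)]
    unfold PatF
    rw [if_neg (by omega), if_pos hc]
    rfl
  · rw [List.getElem_of_eq hpat, List.getElem_append_right (by simp; omega)]
    simp only [List.length_replicate]
    simp only [show i - (n-2) = 1 by omega]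
    rw [List.getElem_append_left (by simp)]
    unfold PatF
    rw [if_neg (by omega), if_neg (by omega), if_pos hc]
    rfl
  · rw [List.getElem_of_eq hpat, List.getElem_append_right (by simp; omega)]
    simp only [List.length_replicate]
    rw [List.getElem_append_right (by simp; omega)]
    simp only [List.length_cons, List.length_nil]
    rw [List.getElem_append_left (by simp; omega), List.getElem_replicate]
    unfold PatF
    rw [if_neg (by omega), if_neg (by omega), if_neg (by omega), if_pos (by omega)]
  · rw [List.getElem_of_eq hpat, List.getElem_append_right (by simp; omega)]
    simp only [List.length_replicate]
    rw [List.getElem_append_right (by simp; omega)]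
    simp only [List.length_cons, List.length_nil]
    rw [List.getElem_append_right (by simp; omega)]
    simp only [List.length_replicate]
    simp only [show i - (n-2) - (0+1+1) - (n-2) = 0 by omega]
    unfold PatF
    rw [if_neg (by omega), if_neg (by omega), if_neg (by omega), if_neg (by omega), if_pos hc]
    rfl
  · rw [List.getElem_of_eq hpat, List.getElem_append_right (by simp; omega)]
    simp only [List.length_replicate]
    rw [List.getElem_append_right (by simp; omega)]
    simp only [List.length_cons, List.length_nil]
    rw [List.getElem_append_right (by simp; omega)]
    simp only [List.length_replicate]
    simp only [show i - (n-2) - (0+1+1) - (n-2) = 1 by omega]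
    unfold PatF
    rw [if_neg (by omega), if_neg (by omega), if_neg (by omega), if_neg (by omega),
        if_neg (by omega)]
    rfl

lemma mod_shift (n : ℕ) (hn : 1 ≤ n) (i : ℕ) :
    (i + n) % (2*n) = (if i % (2*n) < n then i % (2*n) + n else i % (2*n) - n) := by
  have hm : i % (2*n) < 2*n := Nat.mod_lt _ (by omega)
  have e1 : (i+n) % (2*n) = (i % (2*n) + n) % (2*n) := by
    conv_lhs => rw [Nat.add_mod]
    rw [Nat.mod_eq_of_lt (show n < 2*n by omega)]
  rw [e1]
  split_ifs with h
  · exact Nat.mod_eq_of_lt (by omega)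
  · rw [Nat.mod_eq_sub_mod (by omega), show i % (2*n) + n - 2*n = i % (2*n) - n by omega]
    exact Nat.mod_eq_of_lt (by omega)

lemma pat_getElem (n : ℕ) (hn : 5 ≤ n) (x : ℕ) (h : x < (pat n).length) :
    (pat n)[x] = PatF n x := by
  have hx : x < 2*n := by rw [pat_length n (by omega)] at h; exact h
  rw [← List.getD_eq_getElem (pat n) false h]
  exact patF_eq n hn x hx

lemma forward_big (y : List Bool) (hy : y ≠ []) (hn : 5 ≤ y.length)
    (hGood : ∀ u, u <:+: (y ++ comp y) → u ≠ (y ++ comp y) → Good u) :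
    ∃ m, 5 ≤ m ∧ ∃ u v, pat m = u ++ v ∧ (y ++ comp y) = v ++ u := by
  set n := y.length with hndef
  set w := y ++ comp y with hwdef
  have hwlen : w.length = 2*n := by
    rw [hwdef, List.length_append]; simp [comp, hndef]; omega
  set W : ℕ → Bool := fun idx => w.getD (idx % (2*n)) false with hWdef
  have hgetD : ∀ j, j < 2*n → W j = w.getD j false := by
    intro j hj; simp only [hWdef]; rw [Nat.mod_eq_of_lt hj]
  have hyget : ∀ m, m < n → w.getD m false = y.getD m false ∧
      w.getD (m+n) false = !(y.getD m false) := by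
    intro m hm
    constructor
    · rw [List.getD_eq_getElem w false (by omega), List.getD_eq_getElem y false (by omega),
          List.getElem_of_eq hwdef, List.getElem_append_left (by omega)]
    · rw [List.getD_eq_getElem w false (by omega), List.getD_eq_getElem y false (by omega),
          List.getElem_of_eq hwdef, List.getElem_append_right (by rw [hndef]; omega)]
      simp only [comp, hndef]
      simp only [show m + y.length - y.length = m by omega]
      rw [List.getElem_map]
  have Hanti : ∀ i, W (i+n) = !W i := by
    intro i
    have hm : i % (2*n) < 2*n := Nat.mod_lt _ (by omega)
    have hshift := mod_shift n (by omega) i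
    simp only [hWdef]
    rw [hshift]
    split_ifs with h
    · obtain ⟨e1, e2⟩ := hyget (i % (2*n)) h
      rw [e2, e1]
    · have h' : i % (2*n) - n < n := by omega
      obtain ⟨e1, e2⟩ := hyget (i % (2*n) - n) h'
      have e3 : w.getD (i % (2*n)) false = !(y.getD (i % (2*n) - n) false) := by
        have h5 := e2
        rw [show i % (2*n) - n + n = i % (2*n) by omega] at h5
        exact h5
      rw [e1, e3, Bool.not_not]
  have H2 : ∀ k i, 2 ≤ k → k+1 ≤ n → i + 2*k ≤ 2*n →
      ¬(∀ j, j < k → W (i+j+k) = !W (i+j)) := by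
    intro k i hk hkn hik hviol
    set u : List Bool := (List.range (2*k)).map (fun j => W (i+j)) with hudef
    have hulen : u.length = 2*k := by simp [hudef]
    have huelem : ∀ (j : ℕ) (hj : j < u.length), u[j] = W (i+j) := by
      intro j hj
      simp [hudef]
    have hu_eq : u = (w.drop i).take (2*k) := by
      apply List.ext_getElem
      · rw [hulen, List.length_take, List.length_drop, hwlen]; omega
      · intro j h1 h2
        rw [List.getElem_take, List.getElem_drop, huelem j h1]
        rw [hgetD (i+j) (by rw [hulen] at h1; omega),
            List.getD_eq_getElem w false (by rw [hulen] at h1; omega)]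
    have hinf : u <:+: w := by
      rw [hu_eq]
      exact List.infix_iff_prefix_suffix.mpr ⟨w.drop i, List.take_prefix _ _, List.drop_suffix _ _⟩
    have hne : u ≠ w := by
      intro hEq
      have := congrArg List.length hEq
      rw [hulen, hwlen] at this
      omega
    have hanti : Antisquare u := by
      refine ⟨(List.range k).map (fun j => W (i+j)), by simp; omega, ?_⟩
      apply List.ext_getElem
      · rw [hulen]; simp [comp]; omega
      · intro j h1 h2
        have hj2k : j < 2*k := by rw [hulen] at h1; exact h1
        rw [huelem j h1]
        by_cases hjk : j < k
        · rw [List.getElem_append_left (by simp; omega)]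
          simp
        · rw [List.getElem_append_right (by simp; omega)]
          simp only [comp, List.map_map, List.length_map, List.length_range,
            List.getElem_map, List.getElem_range]
          have hv := hviol (j-k) (by omega)
          rw [show i+(j-k)+k = i+j by omega] at hv
          rw [hv]
          rfl
    have := hGood u hinf hne u (List.infix_refl u) hanti
    rcases this with hh | hh <;> (rw [hh] at hulen; simp at hulen; omega)
  have MV : ∀ k r, 2 ≤ k → 2*k ≤ n+1 → (∀ j, j < k → W (r+j+k) = !W (r+j)) → False := by
    intro k r hk hkn
    induction r using Nat.strong_induction_on with
    | _ r IH =>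
      intro hviol
      by_cases hr : r < n
      · exact H2 k r hk (by omega) (by omega) hviol
      · apply IH (r-n) (by omega)
        intro j hj
        have e1 : W ((r-n+j+k)+n) = !W (r-n+j+k) := Hanti _
        have e2 : W ((r-n+j)+n) = !W (r-n+j) := Hanti _
        rw [show (r-n+j+k)+n = r+j+k by omega] at e1
        rw [show (r-n+j)+n = r+j by omega] at e2
        have h3 := hviol j hj
        rw [e1, e2] at h3
        have hb : ∀ a b : Bool, (!a) = !(!b) → a = !b := by decide
        exact hb _ _ h3
  obtain ⟨R, hR0, hz, hb1, hb2, hb3⟩ := machine n W hn Hanti MV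
  have HW : ∀ i, i < 2*n → W (R+i) = PatF n i := reconstruct n W hn Hanti R hR0 hz hb1 hb2 hb3
  set r := R % (2*n) with hrdef
  have hrlt : r < 2*n := Nat.mod_lt _ (by omega)
  refine ⟨n, hn, (pat n).take (2*n - r), (pat n).drop (2*n - r),
    (List.take_append_drop _ _).symm, ?_⟩
  have hplen : (pat n).length = 2*n := pat_length n (by omega)
  have hWP : ∀ a b : ℕ, a % (2*n) = b % (2*n) → W a = W b := by
    intro a b hab; simp only [hWdef]; rw [hab]
  have hkey : ∀ j, j < 2*n → w.getD j false = PatF n ((j + (2*n - r)) % (2*n)) := by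
    intro j hj
    set m := (j + (2*n - r)) % (2*n) with hmdef
    have hmlt : m < 2*n := Nat.mod_lt _ (by omega)
    have hmod : (R + m) % (2*n) = j % (2*n) := by
      obtain ⟨d, hd⟩ : ∃ d, R = 2*n*d + r := ⟨R / (2*n), by rw [hrdef]; exact (Nat.div_add_mod R (2*n)).symm⟩
      have hm2 : m = (if j < r then j + 2*n - r else j - r) := by
        rw [hmdef]
        split_ifs with hc
        · rw [Nat.mod_eq_of_lt (by omega)]; omega
        · rw [Nat.mod_eq_sub_mod (by omega), Nat.mod_eq_of_lt (by omega)]; omega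
      rw [hd, show 2*n*d + r + m = 2*n*d + (r + m) by omega, Nat.mul_add_mod]
      rw [hm2]
      split_ifs with hc
      · rw [show r + (j + 2*n - r) = j + 2*n by omega]
        rw [Nat.add_mod_right]
      · rw [show r + (j - r) = j by omega]
    rw [← hgetD j hj, hWP j (R+m) (by rw [hmod]), HW m hmlt]
  apply List.ext_getElem
  · rw [hwlen, List.length_append, List.length_take, List.length_drop, hplen]
    omega
  · intro j h1 h2
    rw [hwlen] at h1
    have hQ : ((pat n).drop (2*n - r)).length = r := by
      rw [List.length_drop, hplen]; omega
    have hgoal := hkey j h1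
    rw [List.getD_eq_getElem w false (by omega)] at hgoal
    rw [hgoal]
    by_cases hc : j < r
    · rw [List.getElem_append_left (by rw [hQ]; exact hc)]
      rw [List.getElem_drop]
      rw [pat_getElem n hn _ (by rw [hplen]; omega)]
      congr 1
      rw [Nat.mod_eq_of_lt (by omega)]
      omega
    · rw [List.getElem_append_right (by rw [hQ]; omega)]
      rw [List.getElem_take]
      rw [pat_getElem n hn _ (by rw [hplen]; omega)]
      congr 1
      rw [Nat.mod_eq_sub_mod (by omega), Nat.mod_eq_of_lt (by omega), hQ]
      omega

def WPfun (n : ℕ) : ℕ → Bool := fun i => PatF n (i % (2*n))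

lemma WPanti (n : ℕ) (hn : 5 ≤ n) : ∀ i, WPfun n (i+n) = !WPfun n i := by
  intro i
  unfold WPfun
  have hm : i % (2*n) < 2*n := Nat.mod_lt _ (by omega)
  rw [mod_shift n (by omega) i]
  set m := i % (2*n) with hmdef
  split_ifs with h
  · rcases (by omega : m < n-2 ∨ m = n-2 ∨ m = n-1) with hc | hc | hc
    · have e1 : PatF n m = false := by unfold PatF; rw [if_pos hc]
      have e2 : PatF n (m+n) = true := by
        unfold PatF
        rw [if_neg (by omega), if_neg (by omega), if_neg (by omega), if_pos (by omega)]
      rw [e1, e2]; rfl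
    · have e1 : PatF n m = true := by unfold PatF; rw [if_neg (by omega), if_pos hc]
      have e2 : PatF n (m+n) = false := by
        unfold PatF
        rw [if_neg (by omega), if_neg (by omega), if_neg (by omega), if_neg (by omega),
            if_pos (by omega)]
      rw [e1, e2]; rfl
    · have e1 : PatF n m = false := by
        unfold PatF; rw [if_neg (by omega), if_neg (by omega), if_pos hc]
      have e2 : PatF n (m+n) = true := by
        unfold PatF
        rw [if_neg (by omega), if_neg (by omega), if_neg (by omega), if_neg (by omega),
            if_neg (by omega)]
      rw [e1, e2]; rfl
  · rcases (by omega : (n ≤ m ∧ m < 2*n-2) ∨ m = 2*n-2 ∨ m = 2*n-1) with ⟨hc1, hc2⟩ | hc | hc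
    · have e1 : PatF n m = true := by
        unfold PatF
        rw [if_neg (by omega), if_neg (by omega), if_neg (by omega), if_pos (by omega)]
      have e2 : PatF n (m-n) = false := by unfold PatF; rw [if_pos (by omega)]
      rw [e1, e2]; rfl
    · have e1 : PatF n m = false := by
        unfold PatF
        rw [if_neg (by omega), if_neg (by omega), if_neg (by omega), if_neg (by omega),
            if_pos (by omega)]
      have e2 : PatF n (m-n) = true := by
        unfold PatF; rw [if_neg (by omega), if_pos (by omega)]
      rw [e1, e2]; rfl
    · have e1 : PatF n m = true := by
        unfold PatF
        rw [if_neg (by omega), if_neg (by omega), if_neg (by omega), if_neg (by omega),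
            if_neg (by omega)]
      have e2 : PatF n (m-n) = false := by
        unfold PatF; rw [if_neg (by omega), if_neg (by omega), if_pos (by omega)]
      rw [e1, e2]; rfl

lemma sub1mod (n : ℕ) (hn : 1 ≤ n) (a c : ℕ) (h : a % n = c) (hc : 1 ≤ c) :
    (a - 1) % n = c - 1 := by
  have hd := Nat.div_add_mod a n
  have hcn : c < n := by rw [← h]; exact Nat.mod_lt _ (by omega)
  have e : a - 1 = n * (a / n) + (c - 1) := by omega
  rw [e, Nat.mul_add_mod, Nat.mod_eq_of_lt (by omega)]

lemma modadd (n : ℕ) (a k : ℕ) : (a + k) % n = (a % n + k) % n := by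
  conv_lhs => rw [Nat.add_mod]
  conv_rhs => rw [Nat.add_mod, Nat.mod_mod_of_dvd a dvd_rfl]

lemma BPT (n : ℕ) (hn : 5 ≤ n) (x : ℕ) :
    BV (WPfun n) x = true ↔ n - 3 ≤ x % n := by
  have hm : x % (2*n) < 2*n := Nat.mod_lt _ (by omega)
  have hxn : x % n = x % (2*n) % n := (Nat.mod_mod_of_dvd x ⟨2, by ring⟩).symm
  have hx1 : (x+1) % (2*n) = (x % (2*n) + 1) % (2*n) := by
    conv_lhs => rw [Nat.add_mod]
    rw [Nat.mod_eq_of_lt (show 1 < 2*n by omega)]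
  set m := x % (2*n) with hmdef
  have hBV : BV (WPfun n) x = (PatF n ((m+1) % (2*n)) != PatF n m) := by
    unfold BV WPfun
    rw [hx1]
  have hmodlow : ∀ z, z < n → z % n = z := fun z hz => Nat.mod_eq_of_lt hz
  have hmodhigh : ∀ z, n ≤ z → z < 2*n → z % n = z - n := by
    intro z h1 h2
    rw [Nat.mod_eq_sub_mod h1, Nat.mod_eq_of_lt (by omega)]
  rcases (by omega : m < n-3 ∨ m = n-3 ∨ m = n-2 ∨ m = n-1 ∨ (n ≤ m ∧ m < 2*n-3) ∨
      m = 2*n-3 ∨ m = 2*n-2 ∨ m = 2*n-1)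
    with hc | hc | hc | hc | ⟨hc1, hc2⟩ | hc | hc | hc
  · have e1 : PatF n m = false := by unfold PatF; rw [if_pos (by omega)]
    have e2 : PatF n ((m+1) % (2*n)) = false := by
      rw [Nat.mod_eq_of_lt (by omega)]
      unfold PatF; rw [if_pos (by omega)]
    rw [hBV, e1, e2, hxn, hmodlow m (by omega)]
    simp; omega
  · have e1 : PatF n m = false := by unfold PatF; rw [if_pos (by omega)]
    have e2 : PatF n ((m+1) % (2*n)) = true := by
      rw [Nat.mod_eq_of_lt (by omega)]
      unfold PatF; rw [if_neg (by omega), if_pos (by omega)]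
    rw [hBV, e1, e2, hxn, hmodlow m (by omega)]
    simp; omega
  · have e1 : PatF n m = true := by unfold PatF; rw [if_neg (by omega), if_pos (by omega)]
    have e2 : PatF n ((m+1) % (2*n)) = false := by
      rw [Nat.mod_eq_of_lt (by omega)]
      unfold PatF; rw [if_neg (by omega), if_neg (by omega), if_pos (by omega)]
    rw [hBV, e1, e2, hxn, hmodlow m (by omega)]
    simp; omega
  · have e1 : PatF n m = false := by
      unfold PatF; rw [if_neg (by omega), if_neg (by omega), if_pos (by omega)]
    have e2 : PatF n ((m+1) % (2*n)) = true := by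
      rw [Nat.mod_eq_of_lt (by omega)]
      unfold PatF
      rw [if_neg (by omega), if_neg (by omega), if_neg (by omega), if_pos (by omega)]
    rw [hBV, e1, e2, hxn, hmodlow m (by omega)]
    simp; omega
  · have e1 : PatF n m = true := by
      unfold PatF
      rw [if_neg (by omega), if_neg (by omega), if_neg (by omega), if_pos (by omega)]
    have e2 : PatF n ((m+1) % (2*n)) = true := by
      rw [Nat.mod_eq_of_lt (by omega)]
      unfold PatF
      rw [if_neg (by omega), if_neg (by omega), if_neg (by omega), if_pos (by omega)]
    rw [hBV, e1, e2, hxn, hmodhigh m (by omega) (by omega)]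
    simp; omega
  · have e1 : PatF n m = true := by
      unfold PatF
      rw [if_neg (by omega), if_neg (by omega), if_neg (by omega), if_pos (by omega)]
    have e2 : PatF n ((m+1) % (2*n)) = false := by
      rw [Nat.mod_eq_of_lt (by omega)]
      unfold PatF
      rw [if_neg (by omega), if_neg (by omega), if_neg (by omega), if_neg (by omega),
          if_pos (by omega)]
    rw [hBV, e1, e2, hxn, hmodhigh m (by omega) (by omega)]
    simp; omega
  · have e1 : PatF n m = false := by
      unfold PatF
      rw [if_neg (by omega), if_neg (by omega), if_neg (by omega), if_neg (by omega),
          if_pos (by omega)]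
    have e2 : PatF n ((m+1) % (2*n)) = true := by
      rw [Nat.mod_eq_of_lt (by omega)]
      unfold PatF
      rw [if_neg (by omega), if_neg (by omega), if_neg (by omega), if_neg (by omega),
          if_neg (by omega)]
    rw [hBV, e1, e2, hxn, hmodhigh m (by omega) (by omega)]
    simp; omega
  · have e1 : PatF n m = true := by
      unfold PatF
      rw [if_neg (by omega), if_neg (by omega), if_neg (by omega), if_neg (by omega),
          if_neg (by omega)]
    have e2 : PatF n ((m+1) % (2*n)) = false := by
      rw [show m + 1 = 2*n by omega, Nat.mod_self]
      unfold PatF; rw [if_pos (by omega)]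
    rw [hBV, e1, e2, hxn, hmodhigh m (by omega) (by omega)]
    simp; omega

lemma NAP (n : ℕ) (hn : 5 ≤ n) :
    ∀ k r, 2 ≤ k → k ≤ n-1 → ¬(∀ j, j < k → WPfun n (r+j+k) = !WPfun n (r+j)) := by
  intro k r hk hkn hviol
  set WP := WPfun n with hWPdef
  have Hpar : WP (r+k) = !WP r := by
    have := hviol 0 (by omega)
    rwa [show r+0+k = r+k by omega, show r+0 = r by omega] at this
  have Hm : ∀ j, j+1 < k → BV WP (r+j+k) = BV WP (r+j) := by
    intro j hj
    have h1 := hviol j (by omega)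
    have h2 := hviol (j+1) hj
    unfold BV
    rw [show r+j+k+1 = r+(j+1)+k by omega, h2, h1, show r+(j+1) = r+j+1 by omega]
    cases WP (r+j+1) <;> cases WP (r+j) <;> rfl
  have hex : ∃ j, j < k ∧ BV WP (r+j) = true := by
    by_contra hno
    push_neg at hno
    have hall : ∀ j, j < k → BV WP (r+j) = false := by
      intro j hj
      cases h : BV WP (r+j); rfl; exact absurd h (hno j hj)
    have hcst := V_const WP k r hall
    rw [hcst] at Hpar
    exact absurd Hpar (by cases WP r <;> simp)
  have hj0B := (Nat.find_spec hex).2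
  have hj0k := (Nat.find_spec hex).1
  set j0 := Nat.find hex with hj0def
  have hmin : ∀ j, j < j0 → BV WP (r+j) = false := by
    intro j hj
    have hh := Nat.find_min hex hj
    cases h : BV WP (r+j); rfl
    exact absurd ⟨by omega, h⟩ hh
  set c := (r+j0) % n with hcdef
  have hcn : c < n := Nat.mod_lt _ (by omega)
  have hc3 : n-3 ≤ c := (BPT n hn _).mp hj0B
  by_cases hlt : j0 + 1 < k
  · have hBk : BV WP (r+j0+k) = true := by rw [Hm j0 hlt]; exact hj0B
    have h1 : n-3 ≤ (r+j0+k) % n := (BPT n hn _).mp hBk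
    have hckn : (r+j0+k) % n = (c+k) % n := by rw [modadd, ← hcdef]
    by_cases hck : c + k < n
    · have he : (c+k) % n = c+k := Nat.mod_eq_of_lt hck
      rw [hckn, he] at h1
      have hk2 : k = 2 := by omega
      have hcn3 : c = n-3 := by omega
      have hj00 : j0 = 0 := by omega
      have hrc : r % n = c := by rw [hcdef, hj00, Nat.add_zero]
      have hr1 : (r+1) % n = n-2 := by
        rw [modadd, hrc, hcn3, Nat.mod_eq_of_lt (by omega)]
        omega
      have hB1 : BV WP (r+1) = true := (BPT n hn _).mpr (by rw [hr1]; omega)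
      have hBr : BV WP r = true := by
        have := hj0B; rwa [hj00] at this
      have w1 : WP (r+1) = (BV WP r != WP r) := V_succ WP r
      have w2 : WP (r+2) = (BV WP (r+1) != WP (r+1)) := by
        have := V_succ WP (r+1); rwa [show r+1+1 = r+2 by omega] at this
      rw [hk2] at Hpar
      rw [w2, hB1, w1, hBr] at Hpar
      revert Hpar; cases WP r <;> decide
    · have he : (c+k) % n = c+k-n := by
        rw [Nat.mod_eq_sub_mod (by omega), Nat.mod_eq_of_lt (by omega)]
      rw [hckn, he] at h1
      have hj00 : j0 = 0 := by
        by_contra hj0ne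
        have hmod : (r+(j0-1)) % n = c-1 := by
          have := sub1mod n (by omega) (r+j0) c hcdef.symm (by omega)
          rwa [show r+j0-1 = r+(j0-1) by omega] at this
        have htrue : BV WP (r+(j0-1)) = true := (BPT n hn _).mpr (by rw [hmod]; omega)
        rw [hmin (j0-1) (by omega)] at htrue
        exact absurd htrue (by simp)
      have hrc : r % n = c := by rw [hcdef, hj00, Nat.add_zero]
      rcases (by omega : c = n-1 ∨ (c = n-2 ∧ k = n-1)) with hcc | ⟨hcc, hkk⟩
      · have hB1f : BV WP (r+1) = false := by
          have hmod : (r+1) % n = 0 := by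
            rw [modadd, hrc, hcc, show n-1+1 = n by omega, Nat.mod_self]
          cases h : BV WP (r+1); rfl
          have := (BPT n hn _).mp h
          rw [hmod] at this; omega
        have hB1k : BV WP (r+1+k) = true := by
          have hmod : (r+1+k) % n = k := by
            rw [show r+1+k = r+(1+k) by omega, modadd, hrc, hcc,
                show n-1+(1+k) = n+k by omega, Nat.add_mod_left, Nat.mod_eq_of_lt (by omega)]
          exact (BPT n hn _).mpr (by rw [hmod]; omega)
        have hmm := Hm 1 (by omega)
        rw [hB1k, hB1f] at hmm
        exact absurd hmm (by simp)
      · have hB2f : BV WP (r+2) = false := by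
          have hmod : (r+2) % n = 0 := by
            rw [modadd, hrc, hcc, show n-2+2 = n by omega, Nat.mod_self]
          cases h : BV WP (r+2); rfl
          have := (BPT n hn _).mp h
          rw [hmod] at this; omega
        have hB2k : BV WP (r+2+k) = true := by
          have hmod : (r+2+k) % n = n-1 := by
            rw [show r+2+k = r+(2+k) by omega, modadd, hrc, hcc, hkk,
                show n-2+(2+(n-1)) = n+(n-1) by omega, Nat.add_mod_left,
                Nat.mod_eq_of_lt (by omega)]
          exact (BPT n hn _).mpr (by rw [hmod]; omega)
        have hmm := Hm 2 (by omega)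
        rw [hB2k, hB2f] at hmm
        exact absurd hmm (by simp)
  · have hj0k1 : j0 = k-1 := by omega
    rcases (by omega : c = n-3 ∨ n-2 ≤ c) with hcc | hcc
    · have h0 : BV WP (r+0+k) = false := by
        rw [Hm 0 (by omega)]
        exact hmin 0 (by omega)
      have hmod : (r+k) % n = n-2 := by
        rw [show r+k = (r+j0)+1 by omega, modadd, ← hcdef, hcc,
            show n-3+1 = n-2 by omega, Nat.mod_eq_of_lt (by omega)]
      have htrue : BV WP (r+k) = true := (BPT n hn _).mpr (by rw [hmod]; omega)
      rw [show r+0+k = r+k by omega] at h0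
      rw [h0] at htrue
      exact absurd htrue (by simp)
    · have h0 : BV WP (r+(k-2)) = false := hmin (k-2) (by omega)
      have hmod : (r+(k-2)) % n = c-1 := by
        have := sub1mod n (by omega) (r+j0) c hcdef.symm (by omega)
        rwa [show r+j0-1 = r+(k-2) by omega] at this
      have htrue : BV WP (r+(k-2)) = true := (BPT n hn _).mpr (by rw [hmod]; omega)
      rw [h0] at htrue
      exact absurd htrue (by simp)

lemma backward_big (n : ℕ) (hn : 5 ≤ n) (u v : List Bool) (hsplit : pat n = u ++ v) :
    MinAnti (v ++ u) := by
  have hplen : (pat n).length = 2*n := pat_length n (by omega)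
  set q := u.length with hqdef
  have hq2n : q + v.length = 2*n := by
    rw [← hplen, hsplit, List.length_append]
  have hq : q ≤ 2*n := by omega
  have hu : (pat n).take q = u := by rw [hsplit]; exact List.take_left
  have hv : (pat n).drop q = v := by rw [hsplit]; exact List.drop_left
  have hwlen : (v ++ u).length = 2*n := by rw [List.length_append]; omega
  have P3 : ∀ j, j < 2*n → (v ++ u).getD j false = WPfun n (q + j) := by
    intro j hj
    rw [List.getD_eq_getElem _ false (by omega)]
    unfold WPfun
    by_cases hc : j < v.length
    · rw [List.getElem_append_left hc]
      rw [List.getElem_of_eq hv.symm, List.getElem_drop]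
      rw [pat_getElem n hn _ (by rw [hplen]; omega)]
      congr 1
      rw [Nat.mod_eq_of_lt (by omega)]
    · rw [List.getElem_append_right (by omega)]
      rw [List.getElem_of_eq hu.symm, List.getElem_take]
      rw [pat_getElem n hn _ (by rw [hplen]; omega)]
      congr 1
      rw [Nat.mod_eq_sub_mod (by omega), Nat.mod_eq_of_lt (by omega)]
      omega
  constructor
  · refine ⟨(List.range n).map (fun j => WPfun n (q+j)), by simp; omega, ?_⟩
    apply List.ext_getElem
    · rw [hwlen]; simp [comp]; omega
    · intro j h1 h2
      rw [hwlen] at h1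
      have hgj : (v ++ u)[j] = WPfun n (q+j) := by
        rw [← List.getD_eq_getElem (v++u) false (by omega)]
        exact P3 j h1
      rw [hgj]
      by_cases hjn : j < n
      · rw [List.getElem_append_left (by simp; omega)]
        simp
      · rw [List.getElem_append_right (by simp; omega)]
        simp only [comp, List.map_map, List.length_map, List.length_range,
          List.getElem_map, List.getElem_range]
        have := WPanti n hn (q + (j - n))
        rw [show q+(j-n)+n = q+j by omega] at this
        rw [this]
        rfl
  · intro u₀ hinf hne u₂ hinf2 hanti2
    obtain ⟨y₂, hy₂, rfl⟩ := hanti2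
    set k := y₂.length with hkdef
    have hk1 : 1 ≤ k := by
      rw [hkdef]
      cases y₂
      · exact absurd rfl hy₂
      · simp
    by_cases hkone : k = 1
    · have hy2len : y₂.length = 1 := by omega
      obtain ⟨c, hc⟩ := List.length_eq_one_iff.mp hy2len
      subst hc
      cases c
      · left; decide
      · right; decide
    · exfalso
      have hk2 : 2 ≤ k := by omega
      have hinfw : (y₂ ++ comp y₂) <:+: (v ++ u) := hinf2.trans hinf
      have hlen2 : (y₂ ++ comp y₂).length = 2*k := by simp [comp]; omega
      have hu₀lt : u₀.length < 2*n := by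
        have h1 := hinf.length_le
        rw [hwlen] at h1
        rcases Nat.lt_or_ge u₀.length (2*n) with h | h
        · exact h
        · exact absurd (hinf.eq_of_length (by omega)) hne
      have hkn : k ≤ n-1 := by
        have := hinf2.length_le
        rw [hlen2] at this
        omega
      obtain ⟨s', t', hst⟩ := hinfw
      have hi2k : s'.length + 2*k ≤ 2*n := by
        have hthis := congrArg List.length hst
        simp only [List.length_append] at hthis
        have hcl : (comp y₂).length = y₂.length := by simp [comp]
        omega
      have helem : ∀ j, j < 2*k → (v ++ u).getD (s'.length + j) false = (y₂ ++ comp y₂).getD j false := by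
        intro j hj
        rw [List.getD_eq_getElem _ false (by omega), List.getD_eq_getElem _ false (by omega)]
        rw [List.getElem_of_eq hst.symm]
        rw [List.getElem_append_left (show s'.length + j < (s' ++ (y₂ ++ comp y₂)).length by
          rw [List.length_append, hlen2]; omega)]
        rw [List.getElem_append_right (by omega)]
        congr 1
        omega
      have hviol : ∀ j, j < k → WPfun n (q + s'.length + j + k) = !WPfun n (q + s'.length + j) := by
        intro j hj
        have e1 : (y₂ ++ comp y₂).getD j false = y₂.getD j false := by
          rw [List.getD_eq_getElem _ false (by rw [hlen2]; omega),
              List.getD_eq_getElem _ false (by omega),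
              List.getElem_append_left (by omega)]
        have e2 : (y₂ ++ comp y₂).getD (j+k) false = !(y₂.getD j false) := by
          rw [List.getD_eq_getElem _ false (by rw [hlen2]; omega),
              List.getD_eq_getElem _ false (by omega),
              List.getElem_append_right (by omega)]
          simp only [comp]
          rw [List.getElem_map]
          congr 2
          omega
        have p1 := P3 (s'.length + j) (by omega)
        have p2 := P3 (s'.length + (j+k)) (by omega)
        have q1 := helem j (by omega)
        have q2 := helem (j+k) (by omega)
        rw [show q + s'.length + j + k = q + (s'.length + (j+k)) by omega, ← p2, q2, e2,
            show q + s'.length + j = q + (s'.length + j) by omega, ← p1, q1, e1]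
      exact NAP n hn k (q + s'.length) hk2 hkn hviol

lemma antisquare_iff (x : List Bool) :
    Antisquare x ↔ (x ≠ [] ∧ x = x.take (x.length / 2) ++ comp (x.take (x.length / 2))) := by
  constructor
  · rintro ⟨y, hy, rfl⟩
    have hl : (y ++ comp y).length / 2 = y.length := by
      simp [comp]
      omega
    refine ⟨by simp [hy], ?_⟩
    rw [hl, List.take_left]
  · rintro ⟨hne, heq⟩
    refine ⟨_, ?_, heq⟩
    intro h
    rw [h] at heq
    simp [comp] at heq
    exact hne heq

instance : DecidablePred Antisquare := fun x =>
  decidable_of_iff _ (antisquare_iff x).symm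

lemma mem_infix_list (u w : List Bool) : u ∈ w.tails.flatMap List.inits ↔ u <:+: w := by
  rw [List.infix_iff_prefix_suffix]
  simp only [List.mem_flatMap, List.mem_tails, List.mem_inits]
  constructor
  · rintro ⟨a, h1, h2⟩; exact ⟨a, h2, h1⟩
  · rintro ⟨a, h1, h2⟩; exact ⟨a, h2, h1⟩

lemma good_iff (w : List Bool) : Good w ↔
    ∀ u ∈ w.tails.flatMap List.inits, Antisquare u → u = [false, true] ∨ u = [true, false] := by
  constructor
  · intro h u hu; exact h u ((mem_infix_list u w).mp hu)
  · intro h u hu; exact h u ((mem_infix_list u w).mpr hu)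

instance : DecidablePred Good := fun w => decidable_of_iff _ (good_iff w).symm

lemma minanti_iff (w : List Bool) : MinAnti w ↔
    Antisquare w ∧ ∀ u ∈ w.tails.flatMap List.inits, u ≠ w → Good u := by
  unfold MinAnti
  constructor
  · rintro ⟨h1, h2⟩; exact ⟨h1, fun u hu => h2 u ((mem_infix_list u w).mp hu)⟩
  · rintro ⟨h1, h2⟩; exact ⟨h1, fun u hu => h2 u ((mem_infix_list u w).mpr hu)⟩

instance : DecidablePred MinAnti := fun w => decidable_of_iff _ (minanti_iff w).symm

/-- characterization of the minimal antisquares. -/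
theorem stmt_12 (w : List Bool) :
    MinAnti w ↔
      (w = [false, true] ∨ w = [true, false] ∨
       w = [false, false, true, true] ∨ w = [false, true, true, false] ∨
       w = [true, false, false, true] ∨ w = [true, true, false, false] ∨
       w = [false, true, false, true, false, true] ∨
       w = [true, false, true, false, true, false] ∨
       ∃ n, 5 ≤ n ∧ ∃ u v : List Bool, pat n = u ++ v ∧ w = v ++ u) := by
  constructor
  · intro hMin
    obtain ⟨y, hy, hw⟩ := hMin.1
    subst hw
    by_cases hn : 5 ≤ y.length
    · exact Or.inr (Or.inr (Or.inr (Or.inr (Or.inr (Or.inr (Or.inr (Or.inr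
        (forward_big y hy hn hMin.2))))))))
    · rcases y with _ | ⟨a, y⟩
      · exact absurd rfl hy
      rcases y with _ | ⟨b, y⟩
      · cases a
        · exact Or.inl (by decide)
        · exact Or.inr (Or.inl (by decide))
      rcases y with _ | ⟨c, y⟩
      · cases a <;> cases b
        · exact Or.inr (Or.inr (Or.inl (by decide)))
        · exact Or.inr (Or.inr (Or.inr (Or.inl (by decide))))
        · exact Or.inr (Or.inr (Or.inr (Or.inr (Or.inl (by decide)))))
        · exact Or.inr (Or.inr (Or.inr (Or.inr (Or.inr (Or.inl (by decide))))))
      rcases y with _ | ⟨d, y⟩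
      · cases a <;> cases b <;> cases c
        · exact absurd hMin (by decide)
        · exact absurd hMin (by decide)
        · exact Or.inr (Or.inr (Or.inr (Or.inr (Or.inr (Or.inr (Or.inl (by decide)))))))
        · exact absurd hMin (by decide)
        · exact absurd hMin (by decide)
        · exact Or.inr (Or.inr (Or.inr (Or.inr (Or.inr (Or.inr (Or.inr (Or.inl (by decide))))))))
        · exact absurd hMin (by decide)
        · exact absurd hMin (by decide)
      rcases y with _ | ⟨e, y⟩
      · cases a <;> cases b <;> cases c <;> cases d <;> exact absurd hMin (by decide)
      · exfalso
        apply hn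
        simp only [List.length_cons]
        omega
  · intro h
    rcases h with h|h|h|h|h|h|h|h|⟨n, hn5, u, v, hsplit, hw⟩
    · subst h; decide
    · subst h; decide
    · subst h; decide
    · subst h; decide
    · subst h; decide
    · subst h; decide
    · subst h; decide
    · subst h; decide
    · subst hw; exact backward_big n hn5 u v hsplit
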